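/- Let α_L, β_L, β_R > 0, γ_L, γ_R ∈ ℝ with γ_L/β_L − γ_R/β_R ≠ 0, let r, h ∈ ℝ, and let u₁ > 0, w₁ ∈ ℝ. Define v₂ = √(2β_L/α_L)·√u₁, w₂ = w₁ − (√2·γ_L/√(α_Lβ_L))·√u₁, v₃ = −h·v₂, w₃ = w₂ + (γ_R·r/β_R)·v₂, u₄ = (α_L/(2β_L))·v₃², and w₄ = w₃ + (γ_L/β_L)·v₃. Then u₄ = h²·u₁ and w₄ = w₁ − c·κ₃(r,h)·√u₁, where c = (2√(2β_L)/√α_L)·(γ_L/β_L − γ_R/β_R) and κ₃(r,h) = (γ_L(h+1)/(2β_L) − γ_R·r/(2β_R))/(γ_L/β_L − γ_R/β_R). -/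

import Mathlib

/-- Composing the three leading-order steps of the stochastic discontinuity map with
white-noise return data `(r, h)` gives `u₄ = h²u₁` and `w₄ = w₁ − c·κ₃(r,h)·√u₁`, where
`c = (2√(2β_L)/√α_L)(γ_L/β_L − γ_R/β_R)` and
`κ₃(r,h) = (γ_L(h+1)/(2β_L) − γ_R r/(2β_R))/(γ_L/β_L − γ_R/β_R)`. -/
theorem stochastic_discontinuity_map_N3
    (αL βL βR γL γR r h u₁ w₁ : ℝ)
    (hαL : 0 < αL) (hβL : 0 < βL) (hβR : 0 < βR)
    (hne : γL / βL - γR / βR ≠ 0)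
    (hu₁ : 0 < u₁)
    (v₂ w₂ v₃ w₃ u₄ w₄ c κ₃ : ℝ)
    (hv₂ : v₂ = Real.sqrt (2 * βL / αL) * Real.sqrt u₁)
    (hw₂ : w₂ = w₁ - Real.sqrt 2 * γL / Real.sqrt (αL * βL) * Real.sqrt u₁)
    (hv₃ : v₃ = -h * v₂)
    (hw₃ : w₃ = w₂ + γR * r / βR * v₂)
    (hu₄ : u₄ = αL / (2 * βL) * v₃ ^ 2)
    (hw₄ : w₄ = w₃ + γL / βL * v₃)
    (hc : c = 2 * Real.sqrt (2 * βL) / Real.sqrt αL * (γL / βL - γR / βR))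
    (hκ₃ : κ₃ = (γL * (h + 1) / (2 * βL) - γR * r / (2 * βR)) / (γL / βL - γR / βR)) :
    u₄ = h ^ 2 * u₁ ∧ w₄ = w₁ - c * κ₃ * Real.sqrt u₁ := by
  have ha := Real.sqrt_pos.2 hαL
  have hb := Real.sqrt_pos.2 hβL
  have haa : Real.sqrt αL ^ 2 = αL := Real.sq_sqrt hαL.le
  have hbb : Real.sqrt βL ^ 2 = βL := Real.sq_sqrt hβL.le
  have h22 : Real.sqrt 2 ^ 2 = 2 := Real.sq_sqrt (by norm_num)
  have h1 : Real.sqrt (2 * βL / αL) = Real.sqrt 2 * Real.sqrt βL / Real.sqrt αL := by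
    rw [Real.sqrt_div (by positivity), Real.sqrt_mul (by norm_num)]
  have h2 : Real.sqrt (αL * βL) = Real.sqrt αL * Real.sqrt βL := Real.sqrt_mul hαL.le _
  have h3 : Real.sqrt (2 * βL) = Real.sqrt 2 * Real.sqrt βL := Real.sqrt_mul (by norm_num) _
  have huu : Real.sqrt u₁ ^ 2 = u₁ := Real.sq_sqrt hu₁.le
  have key : c * κ₃ = 2 * Real.sqrt 2 * Real.sqrt βL / Real.sqrt αL *
      (γL * (h + 1) / (2 * βL) - γR * r / (2 * βR)) := by
    rw [hc, hκ₃, h3, mul_assoc, mul_comm (γL / βL - γR / βR), div_mul_cancel₀ _ hne]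
    ring
  subst hv₂ hw₂ hv₃ hw₃ hu₄ hw₄
  constructor
  · rw [h1]
    field_simp
    ring_nf
    rw [h22, hbb, huu]
    linear_combination (-(h ^ 2 * βL * u₁ * 2)) * haa
  · rw [key, h1, h2]
    field_simp
    ring_nf
    linear_combination (βR * Real.sqrt 2 * γL * Real.sqrt u₁) * hbb
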